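/- For any 2×2 unitary matrix U = [U_{ij}]_{i,j=1,2}, the trace-norm coherence generating power of the unitary channel ρ ↦ UρU† equals C₁(U) = max{ |U_{11}U_{12}|, |U_{21}U_{22}| }, i.e. sup over diagonal qubit density matrices ρ of (1/2)·inf over diagonal density matrices σ of ‖UρU† − σ‖₁ equals max_{i=1,2} |U_{i1}U_{i2}|. -/

import Mathlib

open scoped Kronecker ComplexOrder Matrix

variable {ι : Type*} [Fintype ι] [DecidableEq ι]

/-- A quantum state: positive semidefinite matrix of trace one. -/
def IsState (ρ : Matrix ι ι ℂ) : Prop := ρ.PosSemidef ∧ ρ.trace = 1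

/-- The action of `id_n ⊗ N` on block matrices. -/
def idTensorMap (n : ℕ) (N : Matrix ι ι ℂ →ₗ[ℂ] Matrix ι ι ℂ)
    (M : Matrix (Fin n × ι) (Fin n × ι) ℂ) : Matrix (Fin n × ι) (Fin n × ι) ℂ :=
  Matrix.of fun p q => N (Matrix.of fun k l => M (p.1, k) (q.1, l)) p.2 q.2

/-- A quantum channel: completely positive trace preserving linear map. -/
structure Channel (ι : Type*) [Fintype ι] [DecidableEq ι] where
  map : Matrix ι ι ℂ →ₗ[ℂ] Matrix ι ι ℂ
  cp : ∀ (n : ℕ) (M : Matrix (Fin n × ι) (Fin n × ι) ℂ), M.PosSemidef →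
        (idTensorMap n map M).PosSemidef
  tp : ∀ A : Matrix ι ι ℂ, (map A).trace = A.trace

/-- The trace norm ‖A‖₁ = Tr √(AᴴA). -/
noncomputable def traceNorm (A : Matrix ι ι ℂ) : ℝ :=
  ((Matrix.posSemidef_conjTranspose_mul_self A).1.eigenvectorUnitary.1 *
    Matrix.diagonal ((fun x : ℝ => (x : ℂ)) ∘ (fun x : ℝ => √x) ∘ (Matrix.posSemidef_conjTranspose_mul_self A).1.eigenvalues) *
    (star (Matrix.posSemidef_conjTranspose_mul_self A).1.eigenvectorUnitary : Matrix ι ι ℂ)).trace.re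

/-- Trace-norm resource measure ω₁. -/
noncomputable def omega1 (F : Set (Matrix ι ι ℂ)) (ρ : Matrix ι ι ℂ) : ℝ :=
  (1/2) * sInf ((fun σ => traceNorm (ρ - σ)) '' F)

/-- Trace-norm resource generating power Ω₁. -/
noncomputable def genPower1 (F : Set (Matrix ι ι ℂ)) (N : Matrix ι ι ℂ → Matrix ι ι ℂ) : ℝ :=
  sSup ((fun ρ => omega1 F (N ρ)) '' F)

/-- Trace-norm resource increasing power Ω̃₁. -/
noncomputable def incPower1 (F : Set (Matrix ι ι ℂ)) (N : Matrix ι ι ℂ → Matrix ι ι ℂ) : ℝ :=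
  sSup ((fun ρ => omega1 F (N ρ) - omega1 F ρ) '' {ρ | IsState ρ})

/-- Holevo–Helstrom success probability of discriminating two channels with probe `ρ`. -/
noncomputable def psuccPair (N M : Matrix ι ι ℂ → Matrix ι ι ℂ) (ρ : Matrix ι ι ℂ) : ℝ :=
  1/2 + (1/4) * traceNorm (N ρ - M ρ)

/-- Success probability of discriminating `N` from the set of channels `Free` with probe `ρ`. -/
noncomputable def psuccChan (N : Matrix ι ι ℂ → Matrix ι ι ℂ) (Free : Set (Channel ι))
    (ρ : Matrix ι ι ℂ) : ℝ :=
  sInf ((fun M : Channel ι => psuccPair N (⇑M.map) ρ) '' Free)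

/-- Maximum success probability of discriminating `N` from `Free` using probes from `F`. -/
noncomputable def psuccFF (N : Matrix ι ι ℂ → Matrix ι ι ℂ) (Free : Set (Channel ι))
    (F : Set (Matrix ι ι ℂ)) : ℝ :=
  sSup ((fun ρ => psuccChan N Free ρ) '' F)

/-- The set of incoherent states: states diagonal in the fixed (standard) basis. -/
def incoherentStates (d : ℕ) : Set (Matrix (Fin d) (Fin d) ℂ) :=
  {ρ | IsState ρ ∧ ρ.IsDiag}

lemma traceNorm_eq_sum_abs_eigenvalues {n : Type*} [Fintype n] [DecidableEq n]
    {A : Matrix n n ℂ} (hA : A.IsHermitian) :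
    traceNorm A = ∑ i, |hA.eigenvalues i| := by
  set V : Matrix n n ℂ := (hA.eigenvectorUnitary : Matrix n n ℂ) with hV
  have hVU : Vᴴ * V = 1 := by
    simpa [Matrix.star_eq_conjTranspose] using hA.eigenvectorUnitary.2.1
  have key : ∀ d e : n → ℂ, (V * Matrix.diagonal d * Vᴴ) * (V * Matrix.diagonal e * Vᴴ)
      = V * Matrix.diagonal (d * e) * Vᴴ := by
    intro d e
    calc (V * Matrix.diagonal d * Vᴴ) * (V * Matrix.diagonal e * Vᴴ)
        = V * Matrix.diagonal d * (Vᴴ * V) * (Matrix.diagonal e * Vᴴ) := by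
          simp only [Matrix.mul_assoc]
      _ = V * (Matrix.diagonal d * Matrix.diagonal e) * Vᴴ := by
          rw [hVU]; simp only [Matrix.mul_assoc, Matrix.one_mul]
      _ = _ := by rw [Matrix.diagonal_mul_diagonal]; rfl
  have hAe : A = V * Matrix.diagonal (fun i => (hA.eigenvalues i : ℂ)) * Vᴴ := by
    exact hA.spectral_theorem
  set B : Matrix n n ℂ :=
    V * Matrix.diagonal (fun i => ((|hA.eigenvalues i| : ℝ) : ℂ)) * Vᴴ with hB
  have hBpsd : B.PosSemidef := by
    apply Matrix.PosSemidef.mul_mul_conjTranspose_same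
    refine Matrix.posSemidef_diagonal_iff.mpr fun i => ?_
    exact Complex.zero_le_real.mpr (abs_nonneg _)
  have habs : (fun i => ((|hA.eigenvalues i| : ℝ) : ℂ)) * (fun i => ((|hA.eigenvalues i| : ℝ) : ℂ))
      = (fun i => ((hA.eigenvalues i : ℝ) : ℂ)) * (fun i => ((hA.eigenvalues i : ℝ) : ℂ)) := by
    funext i
    simp only [Pi.mul_apply]
    rw [← Complex.ofReal_mul, ← Complex.ofReal_mul, ← abs_mul, abs_mul_self]
  have hsq : B ^ 2 = Aᴴ * A := by
    have h1 : Aᴴ * A = A * A := by rw [hA.eq]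
    rw [h1, pow_two, hB, key, habs, ← key, ← hAe]
  have hAA : Aᴴ * A = A * A := by rw [hA.eq]
  have hcfc : traceNorm A = (cfc Real.sqrt (Aᴴ * A)).trace.re := by
    rw [(Matrix.posSemidef_conjTranspose_mul_self A).1.cfc_eq, Matrix.IsHermitian.cfc,
      Unitary.conjStarAlgAut_apply]
    rfl
  have hmul : A * A = cfc (fun x : ℝ => x * x) A := by
    rw [cfc_mul (fun x : ℝ => x) (fun x : ℝ => x) A,
      cfc_id' ℝ A (ha := hA.isSelfAdjoint)]
  have h2 : cfc Real.sqrt (Aᴴ * A) = cfc (fun x : ℝ => |x|) A := by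
    rw [hAA, hmul, ← cfc_comp' Real.sqrt (fun x : ℝ => x * x) A (ha := hA.isSelfAdjoint)]
    exact cfc_congr fun x _ => Real.sqrt_mul_self_eq_abs x
  rw [hcfc, h2, hA.cfc_eq, Matrix.IsHermitian.cfc, Unitary.conjStarAlgAut_apply, Matrix.trace_mul_cycle,
    Unitary.coe_star_mul_self, Matrix.one_mul, Matrix.trace_diagonal]
  simp

lemma two_abs_le_traceNorm {A : Matrix (Fin 2) (Fin 2) ℂ} (hA : A.IsHermitian) :
    2 * ‖A 0 1‖ ≤ traceNorm A := by
  rw [traceNorm_eq_sum_abs_eigenvalues hA]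
  set V : Matrix (Fin 2) (Fin 2) ℂ := (hA.eigenvectorUnitary : Matrix (Fin 2) (Fin 2) ℂ) with hV
  have hVU : Vᴴ * V = 1 := by
    simpa [Matrix.star_eq_conjTranspose] using hA.eigenvectorUnitary.2.1
  have hAe : A = (V * Matrix.diagonal fun i => ((hA.eigenvalues i : ℝ) : ℂ)) * Vᴴ :=
    hA.spectral_theorem
  have hentry : A 0 1 = ∑ i, (hA.eigenvalues i : ℂ) * (V 0 i * (starRingEnd ℂ) (V 1 i)) := by
    conv_lhs => rw [hAe]
    rw [Matrix.mul_apply]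
    refine Finset.sum_congr rfl fun i _ => ?_
    rw [Matrix.mul_diagonal, Matrix.conjTranspose_apply]
    simp only [Complex.star_def]
    ring
  have hcol : ∀ i, ‖V 0 i‖ ^ 2 + ‖V 1 i‖ ^ 2 = 1 := by
    intro i
    have h1 : (Vᴴ * V) i i = 1 := by rw [hVU]; simp
    rw [Matrix.mul_apply] at h1
    simp only [Matrix.conjTranspose_apply, Fin.sum_univ_two] at h1
    have := congrArg Complex.re h1
    simp only [Complex.add_re, Complex.one_re] at this
    rw [Complex.sq_norm, Complex.sq_norm]
    calc Complex.normSq (V 0 i) + Complex.normSq (V 1 i)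
        = ((starRingEnd ℂ) (V 0 i) * V 0 i).re + ((starRingEnd ℂ) (V 1 i) * V 1 i).re := by
          rw [mul_comm, mul_comm ((starRingEnd ℂ) (V 1 i)), Complex.mul_conj]
          simp [Complex.normSq]
      _ = 1 := this
  calc 2 * ‖A 0 1‖
      ≤ 2 * ∑ i, |hA.eigenvalues i| * (‖V 0 i‖ * ‖V 1 i‖) := by
        rw [hentry]
        gcongr 2 * ?_
        refine (norm_sum_le _ _).trans ?_
        refine le_of_eq (Finset.sum_congr rfl fun i _ => ?_)
        simp [norm_mul, Complex.norm_real]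
    _ ≤ 2 * ∑ i, |hA.eigenvalues i| * (1/2) := by
        gcongr 2 * ?_
        refine Finset.sum_le_sum fun i _ => ?_
        refine mul_le_mul_of_nonneg_left ?_ (abs_nonneg _)
        nlinarith [hcol i, sq_nonneg (‖V 0 i‖ - ‖V 1 i‖)]
    _ = ∑ i, |hA.eigenvalues i| := by
        rw [Finset.mul_sum]
        refine Finset.sum_congr rfl fun i _ => by ring

lemma traceNorm_offdiag {A : Matrix (Fin 2) (Fin 2) ℂ}
    (h00 : A 0 0 = 0) (h11 : A 1 1 = 0) (h10 : A 1 0 = (starRingEnd ℂ) (A 0 1)) :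
    traceNorm A = 2 * ‖A 0 1‖ := by
  set z := A 0 1 with hz
  have hprod : Aᴴ * A = Matrix.diagonal (fun _ => ((‖z‖ : ℝ) : ℂ))
      * Matrix.diagonal (fun _ => ((‖z‖ : ℝ) : ℂ)) := by
    rw [Matrix.diagonal_mul_diagonal]
    ext i j
    fin_cases i <;> fin_cases j <;>
      simp [Matrix.mul_apply, Fin.sum_univ_two, Matrix.conjTranspose_apply, h00, h11, h10,
        ← hz, ← Complex.ofReal_mul, Complex.normSq_eq_norm_sq, Complex.mul_conj, mul_comm, sq]
  have hBpsd : (Matrix.diagonal (fun _ : Fin 2 => ((‖z‖ : ℝ) : ℂ))).PosSemidef :=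
    Matrix.posSemidef_diagonal_iff.mpr fun _ => Complex.zero_le_real.mpr (norm_nonneg _)
  have hAlg : Aᴴ * A = algebraMap ℝ (Matrix (Fin 2) (Fin 2) ℂ) (‖z‖ * ‖z‖) := by
    rw [hprod, Matrix.diagonal_mul_diagonal, Matrix.algebraMap_eq_diagonal]
    congr 1; funext i; simp
  have hcfc : traceNorm A = (cfc Real.sqrt (Aᴴ * A)).trace.re := by
    rw [(Matrix.posSemidef_conjTranspose_mul_self A).1.cfc_eq, Matrix.IsHermitian.cfc,
      Unitary.conjStarAlgAut_apply]
    rfl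
  rw [hcfc, hAlg, cfc_algebraMap, Real.sqrt_mul_self (norm_nonneg _),
    Matrix.algebraMap_eq_diagonal, Matrix.trace_diagonal]
  simp [Fin.sum_univ_two, two_mul]

lemma PosSemidef.diag_entry_nonneg {M : Matrix ι ι ℂ} (hM : M.PosSemidef) (i : ι) :
    0 ≤ M i i := by
  exact hM.diag_nonneg

lemma omega1_qubit {M : Matrix (Fin 2) (Fin 2) ℂ} (hM : M.PosSemidef) (htr : M.trace = 1) :
    omega1 (incoherentStates 2) M = ‖M 0 1‖ := by
  set σ₀ : Matrix (Fin 2) (Fin 2) ℂ := Matrix.diagonal M.diag with hσ₀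
  have hσ₀mem : σ₀ ∈ incoherentStates 2 := by
    refine ⟨⟨Matrix.PosSemidef.diagonal fun i => PosSemidef.diag_entry_nonneg hM i, ?_⟩,
      Matrix.isDiag_diagonal _⟩
    rw [Matrix.trace_diagonal, ← htr, Matrix.trace]
  have hval : traceNorm (M - σ₀) = 2 * ‖M 0 1‖ := by
    have h01 : (M - σ₀) 0 1 = M 0 1 := by simp [hσ₀, Matrix.diagonal]
    rw [← h01]
    refine traceNorm_offdiag (by simp [hσ₀, Matrix.diagonal, Matrix.diag]) 
      (by simp [hσ₀, Matrix.diagonal, Matrix.diag]) ?_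
    rw [h01]
    have h10 : (M - σ₀) 1 0 = M 1 0 := by simp [hσ₀, Matrix.diagonal]
    rw [h10]
    have h := congrFun (congrFun hM.1 1) 0
    rw [Matrix.conjTranspose_apply] at h
    exact h.symm
  have hlb : ∀ x ∈ (fun σ => traceNorm (M - σ)) '' (incoherentStates 2),
      2 * ‖M 0 1‖ ≤ x := by
    rintro x ⟨σ, hσ, rfl⟩
    have hherm : (M - σ).IsHermitian := hM.1.sub hσ.1.1.1
    have h01 : (M - σ) 0 1 = M 0 1 := by
      have : σ 0 1 = 0 := hσ.2 (by decide)
      simp [this]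
    calc 2 * ‖M 0 1‖ = 2 * ‖(M - σ) 0 1‖ := by rw [h01]
      _ ≤ traceNorm (M - σ) := two_abs_le_traceNorm hherm
  have hinf : sInf ((fun σ => traceNorm (M - σ)) '' (incoherentStates 2))
      = 2 * ‖M 0 1‖ := by
    refine le_antisymm ?_ (le_csInf ⟨_, Set.mem_image_of_mem _ hσ₀mem⟩ hlb)
    refine csInf_le ⟨2 * ‖M 0 1‖, fun x hx => hlb x hx⟩ ?_
    rw [← hval]
    exact Set.mem_image_of_mem _ hσ₀mem
  rw [omega1, hinf]
  ring

/-- for a 2×2 unitary `U`, the trace-norm coherence generating power of the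
unitary channel `ρ ↦ UρU†` is `max {|U₁₁U₁₂|, |U₂₁U₂₂|}`. -/
theorem stmt16 (U : Matrix (Fin 2) (Fin 2) ℂ) (hU : U ∈ Matrix.unitaryGroup (Fin 2) ℂ) :
    genPower1 (incoherentStates 2) (fun ρ => U * ρ * Uᴴ)
      = max ‖U 0 0 * U 0 1‖ ‖U 1 0 * U 1 1‖ := by
  have hUUh : U * Uᴴ = 1 := by
    rw [← Matrix.star_eq_conjTranspose]; exact Matrix.mem_unitaryGroup_iff.mp hU
  have hUhU : Uᴴ * U = 1 := by
    rw [← Matrix.star_eq_conjTranspose]; exact Matrix.mem_unitaryGroup_iff'.mp hU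
  have horth : U 0 0 * (starRingEnd ℂ) (U 1 0) + U 0 1 * (starRingEnd ℂ) (U 1 1) = 0 := by
    have e := congrFun (congrFun hUUh 0) 1
    simpa [Matrix.mul_apply, Fin.sum_univ_two, Matrix.conjTranspose_apply, Matrix.one_apply]
      using e
  have hrow0 : ‖U 0 0‖ ^ 2 + ‖U 0 1‖ ^ 2 = 1 := by
    have e := congrFun (congrFun hUUh 0) 0
    simp only [Matrix.mul_apply, Fin.sum_univ_two, Matrix.conjTranspose_apply,
      Matrix.one_apply_eq, Complex.mul_conj] at e
    have := congrArg Complex.re e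
    simpa [Complex.sq_norm, Complex.normSq_apply] using this
  have hrow1 : ‖U 1 0‖ ^ 2 + ‖U 1 1‖ ^ 2 = 1 := by
    have e := congrFun (congrFun hUUh 1) 1
    simp only [Matrix.mul_apply, Fin.sum_univ_two, Matrix.conjTranspose_apply,
      Matrix.one_apply_eq, Complex.mul_conj] at e
    have := congrArg Complex.re e
    simpa [Complex.sq_norm, Complex.normSq_apply] using this
  have hcol0 : ‖U 0 0‖ ^ 2 + ‖U 1 0‖ ^ 2 = 1 := by
    have e := congrFun (congrFun hUhU 0) 0
    simp only [Matrix.mul_apply, Fin.sum_univ_two, Matrix.conjTranspose_apply,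
      Matrix.one_apply_eq, ← Complex.normSq_eq_conj_mul_self] at e
    have := congrArg Complex.re e
    simpa [Complex.sq_norm, Complex.normSq_apply] using this
  have habs10 : ‖U 0 1‖ = ‖U 1 0‖ := by
    rw [← Real.sqrt_sq (norm_nonneg (U 0 1)), ← Real.sqrt_sq (norm_nonneg (U 1 0))]
    congr 1; linarith
  have habs11 : ‖U 1 1‖ = ‖U 0 0‖ := by
    rw [← Real.sqrt_sq (norm_nonneg (U 1 1)), ← Real.sqrt_sq (norm_nonneg (U 0 0))]
    congr 1; linarith
  set c : ℝ := ‖U 0 0‖ * ‖U 1 0‖ with hc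
  have hmaxc : max ‖U 0 0 * U 0 1‖ ‖U 1 0 * U 1 1‖ = c := by
    rw [norm_mul, norm_mul, habs10, habs11, hc, mul_comm (‖U 1 0‖)]
    exact max_self _
  -- entry formula
  have hM01 : ∀ ρ : Matrix (Fin 2) (Fin 2) ℂ, ρ ∈ incoherentStates 2 →
      (U * ρ * Uᴴ) 0 1 = (ρ 0 0 - ρ 1 1) * (U 0 0 * (starRingEnd ℂ) (U 1 0)) := by
    intro ρ hρ
    have h01 : ρ 0 1 = 0 := hρ.2 (by decide)
    have h10 : ρ 1 0 = 0 := hρ.2 (by decide)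
    have expand : (U * ρ * Uᴴ) 0 1
        = ρ 0 0 * (U 0 0 * (starRingEnd ℂ) (U 1 0)) + ρ 1 1 * (U 0 1 * (starRingEnd ℂ) (U 1 1)) := by
      simp only [Matrix.mul_apply, Fin.sum_univ_two, Matrix.conjTranspose_apply, h01, h10,
        Complex.star_def]
      ring
    rw [expand]
    have : U 0 1 * (starRingEnd ℂ) (U 1 1) = -(U 0 0 * (starRingEnd ℂ) (U 1 0)) := by
      linear_combination horth
    rw [this]; ring
  -- for any incoherent ρ, value of omega1
  have hval : ∀ ρ : Matrix (Fin 2) (Fin 2) ℂ, ρ ∈ incoherentStates 2 →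
      omega1 (incoherentStates 2) (U * ρ * Uᴴ)
        = ‖ρ 0 0 - ρ 1 1‖ * c := by
    intro ρ hρ
    have hpsd : (U * ρ * Uᴴ).PosSemidef := hρ.1.1.mul_mul_conjTranspose_same U
    have htr : (U * ρ * Uᴴ).trace = 1 := by
      rw [Matrix.trace_mul_cycle, hUhU, Matrix.one_mul]
      exact hρ.1.2
    rw [omega1_qubit hpsd htr, hM01 ρ hρ, norm_mul, norm_mul, Complex.norm_conj, hc]
  -- bound on |ρ00 - ρ11|
  have hbound : ∀ ρ : Matrix (Fin 2) (Fin 2) ℂ, ρ ∈ incoherentStates 2 →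
      ‖ρ 0 0 - ρ 1 1‖ ≤ 1 := by
    intro ρ hρ
    have h0 := PosSemidef.diag_entry_nonneg hρ.1.1 0
    have h1 := PosSemidef.diag_entry_nonneg hρ.1.1 1
    have htr : ρ 0 0 + ρ 1 1 = 1 := by
      have := hρ.1.2
      rw [Matrix.trace] at this
      simpa [Fin.sum_univ_two, Matrix.diag] using this
    rw [Complex.nonneg_iff] at h0 h1
    have him : (ρ 0 0 - ρ 1 1).im = 0 := by
      have := congrArg Complex.im htr
      simp only [Complex.add_im, Complex.one_im] at this
      simp [Complex.sub_im]; linarith [h0.2, h1.2]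
    have hre : (ρ 0 0).re + (ρ 1 1).re = 1 := by
      have := congrArg Complex.re htr
      simpa using this
    have : ρ 0 0 - ρ 1 1 = (((ρ 0 0).re - (ρ 1 1).re : ℝ) : ℂ) := by
      apply Complex.ext <;> simp [him, h0.2, h1.2]
    rw [this, Complex.norm_real, Real.norm_eq_abs]
    rw [abs_le]
    constructor <;> linarith [h0.1, h1.1]
  -- achieving state
  set ρs : Matrix (Fin 2) (Fin 2) ℂ := Matrix.diagonal ![1, 0] with hρs
  have hρsmem : ρs ∈ incoherentStates 2 := by
    refine ⟨⟨Matrix.PosSemidef.diagonal ?_, ?_⟩, Matrix.isDiag_diagonal _⟩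
    · intro i
      fin_cases i
      · show (0:ℂ) ≤ 1
        exact zero_le_one
      · show (0:ℂ) ≤ 0
        exact le_refl 0
    · rw [hρs, Matrix.trace_diagonal, Fin.sum_univ_two]
      norm_num
  have hρsval : omega1 (incoherentStates 2) (U * ρs * Uᴴ) = c := by
    rw [hval ρs hρsmem]
    have h00 : ρs 0 0 = 1 := by rw [hρs]; rw [Matrix.diagonal_apply_eq]; rfl
    have h11 : ρs 1 1 = 0 := by rw [hρs]; rw [Matrix.diagonal_apply_eq]; rfl
    rw [h00, h11]
    simp
  -- sSup computation
  rw [hmaxc, genPower1]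
  refine le_antisymm (csSup_le ⟨_, Set.mem_image_of_mem _ hρsmem⟩ ?_)
    (le_csSup ⟨c, ?_⟩ ?_)
  · rintro x ⟨ρ, hρ, rfl⟩
    simp only
    rw [hval ρ hρ]
    calc ‖ρ 0 0 - ρ 1 1‖ * c ≤ 1 * c := by
          refine mul_le_mul_of_nonneg_right (hbound ρ hρ) ?_
          exact mul_nonneg (norm_nonneg _) (norm_nonneg _)
      _ = c := one_mul c
  · rintro x ⟨ρ, hρ, rfl⟩
    simp only
    rw [hval ρ hρ]
    calc ‖ρ 0 0 - ρ 1 1‖ * c ≤ 1 * c := by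
          refine mul_le_mul_of_nonneg_right (hbound ρ hρ) ?_
          exact mul_nonneg (norm_nonneg _) (norm_nonneg _)
      _ = c := one_mul c
  · rw [← hρsval]
    exact Set.mem_image_of_mem _ hρsmem
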